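/- (Non-singularity of the switching function for the perfect SIR barrier.) Let γ > 0, let J ⊆ ℝ be a nondegenerate interval, let β, S, I : ℝ → ℝ be arbitrary functions, and let λ₁, λ₂ : ℝ → ℝ be differentiable on J and satisfy the SIR adjoint equations λ₁'(t) = β(t) I(t) λ₁(t) − β(t) I(t) λ₂(t) and λ₂'(t) = β(t) S(t) λ₁(t) + (−β(t) S(t) + γ) λ₂(t) for all t ∈ J. If λ₂(t) − λ₁(t) = 0 for all t ∈ J, then λ₁(t) = λ₂(t) = 0 for all t ∈ J. Consequently, a nowhere-vanishing adjoint solution cannot have λ₂ − λ₁ ≡ 0 on any interval, so the bang-bang barrier input of the perfect SIR model switches only at isolated points in time. -/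

import Mathlib

/-- Non-singularity of the switching function for the perfect SIR barrier:
if a solution `(lam₁, lam₂)` of the SIR adjoint equations on a nondegenerate
interval `J` satisfies `lam₂ − lam₁ ≡ 0` on `J`, then it vanishes identically
on `J`. Consequently a nowhere-vanishing adjoint solution cannot have
`lam₂ − lam₁ ≡ 0` on any interval, so the bang-bang barrier input of the
perfect SIR model switches only at isolated points in time. -/
theorem sir_adjoint_switching_nonsingular
    (γ : ℝ) (hγ : 0 < γ)
    (J : Set ℝ) (hJ : J.OrdConnected) (hJne : ∃ a ∈ J, ∃ b ∈ J, a < b)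
    (β S I lam₁ lam₂ : ℝ → ℝ)
    (hlam₁ : ∀ t ∈ J,
      HasDerivWithinAt lam₁ (β t * I t * lam₁ t - β t * I t * lam₂ t) J t)
    (hlam₂ : ∀ t ∈ J,
      HasDerivWithinAt lam₂ (β t * S t * lam₁ t + (-(β t * S t) + γ) * lam₂ t) J t)
    (hswitch : ∀ t ∈ J, lam₂ t - lam₁ t = 0) :
    ∀ t ∈ J, lam₁ t = 0 ∧ lam₂ t = 0 := by
  obtain ⟨a, ha, b, hb, hab⟩ := hJne
  have hconv : Convex ℝ J := hJ.convex
  have hint : (interior J).Nonempty := by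
    have hIoo : Set.Ioo a b ⊆ J := fun x hx => hJ.out ha hb ⟨hx.1.le, hx.2.le⟩
    have : Set.Ioo a b ⊆ interior J := isOpen_Ioo.subset_interior_iff.mpr hIoo
    exact ⟨(a + b) / 2, this ⟨by linarith, by linarith⟩⟩
  intro t ht
  have huniq : UniqueDiffWithinAt ℝ J t :=
    uniqueDiffWithinAt_convex hconv hint (subset_closure ht)
  have heq : lam₁ t = lam₂ t := by have := hswitch t ht; linarith
  -- derivative of lam₂ - lam₁ from the ODE
  have hd1 : HasDerivWithinAt (fun s => lam₂ s - lam₁ s) (γ * lam₂ t) J t := by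
    have : HasDerivWithinAt (fun s => lam₂ s - lam₁ s) _ J t := (hlam₂ t ht).sub (hlam₁ t ht)
    convert this using 1
    rw [heq]; ring
  -- derivative of lam₂ - lam₁ from being ≡ 0
  have hd2 : HasDerivWithinAt (fun s => lam₂ s - lam₁ s) 0 J t := by
    have h0 : HasDerivWithinAt (fun _ : ℝ => (0 : ℝ)) 0 J t := hasDerivWithinAt_const t J 0
    exact h0.congr (fun s hs => (hswitch s hs)) (hswitch t ht) |>.congr
      (fun s hs => rfl) rfl
  have : γ * lam₂ t = 0 := by
    have e1 := hd1.derivWithin huniq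
    have e2 := hd2.derivWithin huniq
    rw [e1] at e2; exact e2
  have hl2 : lam₂ t = 0 := by
    rcases mul_eq_zero.mp this with h | h
    · exact absurd h (ne_of_gt hγ)
    · exact h
  exact ⟨heq.trans hl2, hl2⟩
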